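/- arXiv:1803.05064 — 2 statements merged into one kernel-verified Lean document; each statement's English description precedes it below -/
import Mathlib

section
/- A group G has no nontrivial ICC quotient if and only if G equals its hyper-FC center (i.e., G is hyper-FC central). -/
universe u

/-- The conjugacy class of `g` in `G`. -/
def conjClassSet {G : Type u} [Group G] (g : G) : Set G := {h | ∃ x : G, x * g * x⁻¹ = h}

/-- An FC-element is one with a finite conjugacy class. -/
def IsFCElement {G : Type u} [Group G] (g : G) : Prop := (conjClassSet g).Finite

/-- A group is ICC if every nonidentity element has an infinite conjugacy class. -/
def IsICC (G : Type u) [Group G] : Prop := ∀ g : G, g ≠ 1 → (conjClassSet g).Infinite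

/-- The FC-center of a group: the subgroup of elements with finite conjugacy class. -/
def FCCenter (G : Type u) [Group G] : Subgroup G where
  carrier := {g | IsFCElement g}
  one_mem' := Set.Finite.subset (Set.finite_singleton 1) (by rintro h ⟨x, rfl⟩; simp)
  mul_mem' := by
    intro a b ha hb
    refine ((Set.Finite.image (fun p : G × G => p.1 * p.2) (ha.prod hb)).subset ?_)
    rintro h ⟨x, rfl⟩
    exact ⟨(x * a * x⁻¹, x * b * x⁻¹), ⟨⟨x, rfl⟩, ⟨x, rfl⟩⟩, by group⟩
  inv_mem' := by
    intro a ha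
    refine (ha.image Inv.inv).subset ?_
    rintro h ⟨x, rfl⟩
    exact ⟨x * a * x⁻¹, ⟨x, rfl⟩, by group⟩

instance FCCenter_normal (G : Type u) [Group G] : (FCCenter G).Normal := by
  constructor
  intro n hn g
  refine Set.Finite.subset hn ?_
  rintro h ⟨x, rfl⟩
  exact ⟨x * g, by group⟩

/-- One step of the upper FC-series: the preimage of the FC-center of the quotient. -/
noncomputable def fcStep {G : Type u} [Group G] (F : Subgroup G) : Subgroup G :=
  (FCCenter (G ⧸ Subgroup.normalClosure (F : Set G))).comap
    (QuotientGroup.mk' (Subgroup.normalClosure (F : Set G)))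

instance fcStep_normal {G : Type u} [Group G] (F : Subgroup G) : (fcStep F).Normal :=
  Subgroup.Normal.comap inferInstance _

/-- The (transfinite) upper FC-series of `G`. -/
noncomputable def FCSeries (G : Type u) [Group G] (o : Ordinal.{u}) : Subgroup G :=
  Ordinal.limitRecOn o ⊥ (fun _ F => fcStep F)
    (fun o _ ih => ⨆ a : {a : Ordinal.{u} // a < o}, ih a a.2)

lemma FCSeries_zero (G : Type u) [Group G] : FCSeries G 0 = ⊥ :=
  Ordinal.limitRecOn_zero ..

lemma FCSeries_succ (G : Type u) [Group G] (o : Ordinal.{u}) :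
    FCSeries G (o + 1) = fcStep (FCSeries G o) :=
  Ordinal.limitRecOn_succ ..

lemma FCSeries_limit (G : Type u) [Group G] (o : Ordinal.{u}) (h : Order.IsSuccLimit o) :
    FCSeries G o = ⨆ a : {a : Ordinal.{u} // a < o}, FCSeries G a :=
  Ordinal.limitRecOn_limit _ _ _ _ h

lemma normal_iSup {G : Type u} [Group G] {ι : Sort*} (f : ι → Subgroup G)
    (h : ∀ i, (f i).Normal) : (⨆ i, f i).Normal := by
  constructor
  intro n hn g
  have key : Subgroup.map (MulAut.conj g).toMonoidHom (⨆ i, f i) = ⨆ i, f i := by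
    rw [Subgroup.map_iSup]
    refine iSup_congr fun i => ?_
    ext x
    constructor
    · rintro ⟨y, hy, rfl⟩
      exact (h i).conj_mem y hy g
    · intro hx
      exact ⟨g⁻¹ * x * g, by simpa using (h i).conj_mem x hx g⁻¹, by simp [MulAut.conj]; group⟩
  rw [← key]
  exact ⟨n, hn, rfl⟩

instance FCSeries_normal (G : Type u) [Group G] (o : Ordinal.{u}) : (FCSeries G o).Normal := by
  induction o using Ordinal.limitRecOn with
  | zero => rw [FCSeries_zero]; infer_instance
  | add_one o ih => rw [FCSeries_succ]; infer_instance
  | limit o ho ih => rw [FCSeries_limit G o ho]; exact normal_iSup _ fun a => ih a a.2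

/-- The hyper-FC center of `G`: the stabilized term of the upper FC-series. -/
noncomputable def hyperFCCenter (G : Type u) [Group G] : Subgroup G :=
  ⨆ o : Ordinal.{u}, FCSeries G o

instance hyperFCCenter_normal (G : Type u) [Group G] : (hyperFCCenter G).Normal :=
  normal_iSup _ fun _ => inferInstance

/-- The finitely-indexed upper FC-series. -/
noncomputable def natFCSeries (G : Type u) [Group G] : ℕ → Subgroup G
  | 0 => ⊥
  | n + 1 => fcStep (natFCSeries G n)

section Helpers

variable {G : Type u} [Group G]

lemma isFCElement_map {J : Type v} [Group J] (τ : G →* J)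
    (hτ : Function.Surjective τ) {g : G} (hg : IsFCElement g) : IsFCElement (τ g) := by
  refine (hg.image τ).subset ?_
  rintro h ⟨y, rfl⟩
  obtain ⟨x, rfl⟩ := hτ y
  exact ⟨x * g * x⁻¹, ⟨x, rfl⟩, by simp [map_mul]⟩

lemma le_fcStep (F : Subgroup G) : F ≤ fcStep F := by
  intro g hg
  have h1 : (QuotientGroup.mk' (Subgroup.normalClosure (F : Set G))) g = 1 :=
    (QuotientGroup.eq_one_iff _).mpr (Subgroup.le_normalClosure hg)
  show (QuotientGroup.mk' (Subgroup.normalClosure (F : Set G))) g ∈ FCCenter _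
  rw [h1]
  exact (FCCenter _).one_mem

lemma fcStep_mono {F1 F2 : Subgroup G} (h : F1 ≤ F2) : fcStep F1 ≤ fcStep F2 := by
  set N1 := Subgroup.normalClosure (F1 : Set G)
  set N2 := Subgroup.normalClosure (F2 : Set G)
  have hN : N1 ≤ N2 := Subgroup.normalClosure_mono h
  have hN' : N1 ≤ N2.comap (MonoidHom.id G) := hN
  let φ : G ⧸ N1 →* G ⧸ N2 := QuotientGroup.map N1 N2 (MonoidHom.id G) hN'
  have hφ : Function.Surjective φ := by
    intro q
    obtain ⟨x, rfl⟩ := QuotientGroup.mk_surjective q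
    exact ⟨QuotientGroup.mk x, rfl⟩
  intro g hg
  have : IsFCElement ((QuotientGroup.mk' N1) g) := hg
  have h2 : IsFCElement (φ ((QuotientGroup.mk' N1) g)) := isFCElement_map φ hφ this
  exact h2

lemma FCSeries_mono (G : Type u) [Group G] : Monotone (FCSeries G) := by
  intro o1 o2 h
  induction o2 using Ordinal.limitRecOn with
  | zero =>
    rw [nonpos_iff_eq_zero] at h; subst h; exact le_rfl
  | add_one o ih =>
    rw [Ordinal.add_one_eq_succ] at h ⊢
    rcases Order.le_succ_iff_eq_or_le.mp h with h' | h'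
    · subst h'; exact le_rfl
    · calc FCSeries G o1 ≤ FCSeries G o := ih h'
        _ ≤ fcStep (FCSeries G o) := le_fcStep _
        _ = FCSeries G (Order.succ o) := by
            rw [← Ordinal.add_one_eq_succ, FCSeries_succ]
  | limit o ho ih =>
    rcases h.lt_or_eq with h' | h'
    · rw [FCSeries_limit G o ho]
      exact le_iSup_of_le ⟨o1, h'⟩ le_rfl
    · subst h'; exact le_rfl

lemma exists_fcFixed (G : Type u) [Group G] :
    ∃ o : Ordinal.{u}, FCSeries G (o + 1) = FCSeries G o := by
  by_contra hcon
  push_neg at hcon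
  have hstrict : StrictMono (FCSeries G) := by
    intro a b hab
    have h1 : FCSeries G a < FCSeries G (a + 1) :=
      lt_of_le_of_ne (FCSeries_mono G (le_of_lt (by
        rw [Ordinal.add_one_eq_succ]; exact Order.lt_succ a))) (Ne.symm (hcon a))
    have h2 : a + 1 ≤ b := by
      rw [Ordinal.add_one_eq_succ]; exact Order.succ_le_of_lt hab
    exact lt_of_lt_of_le h1 (FCSeries_mono G h2)
  exact not_small_ordinal.{u, u} (small_of_injective hstrict.injective)

lemma FCSeries_eq_of_fixed {G : Type u} [Group G] {o1 : Ordinal.{u}}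
    (hfix : FCSeries G (o1 + 1) = FCSeries G o1) :
    ∀ o : Ordinal.{u}, o1 ≤ o → FCSeries G o = FCSeries G o1 := by
  intro o
  induction o using Ordinal.limitRecOn with
  | zero => intro h; rw [nonpos_iff_eq_zero] at h; rw [h]
  | add_one o ih =>
    rw [Ordinal.add_one_eq_succ]
    intro h
    rcases (Order.le_succ_iff_eq_or_le.mp h) with h' | h'
    · rw [← h']
    · rw [← Ordinal.add_one_eq_succ, FCSeries_succ, ih h', ← FCSeries_succ, hfix]
  | limit o ho ih =>
    intro h
    rcases h.lt_or_eq with h' | h'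
    · rw [FCSeries_limit G o ho]
      apply le_antisymm
      · refine iSup_le fun a => ?_
        rcases le_total (a : Ordinal) o1 with ha | ha
        · exact FCSeries_mono G ha
        · exact (ih a a.2 ha).le
      · exact le_iSup_of_le ⟨o1, h'⟩ le_rfl
    · rw [← h']

lemma hyperFCCenter_eq_fixed {G : Type u} [Group G] {o1 : Ordinal.{u}}
    (hfix : FCSeries G (o1 + 1) = FCSeries G o1) :
    hyperFCCenter G = FCSeries G o1 := by
  apply le_antisymm
  · refine iSup_le fun o => ?_
    rcases le_total o o1 with h | h
    · exact FCSeries_mono G h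
    · exact (FCSeries_eq_of_fixed hfix o h).le
  · exact le_iSup (FCSeries G) o1

end Helpers

/-- G has no nontrivial ICC quotient iff G equals its hyper-FC center. -/
theorem no_nontrivial_icc_quotient_iff_hyperFC_central (G : Type u) [Group G] :
    (¬ ∃ (J : Type u) (_ : Group J) (τ : G →* J),
        Function.Surjective τ ∧ IsICC J ∧ Nontrivial J) ↔
      hyperFCCenter G = ⊤ := by
  constructor
  · intro hno
    obtain ⟨o1, hfix⟩ := exists_fcFixed G
    rw [hyperFCCenter_eq_fixed hfix]
    by_contra hne
    apply hno
    set F := FCSeries G o1 with hF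
    haveI hFn : F.Normal := FCSeries_normal G o1
    have hFfix : fcStep F = F := by rw [← FCSeries_succ, hfix]
    refine ⟨G ⧸ Subgroup.normalClosure (F : Set G), inferInstance,
      QuotientGroup.mk' _, QuotientGroup.mk'_surjective _, ?_, ?_⟩
    · intro g hg hfin
      obtain ⟨x, rfl⟩ := QuotientGroup.mk'_surjective _ g
      have hx : x ∈ fcStep F := hfin
      rw [hFfix] at hx
      exact hg ((QuotientGroup.eq_one_iff _).mpr (Subgroup.le_normalClosure hx))
    · have hN : Subgroup.normalClosure (F : Set G) ≠ ⊤ := by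
        rw [Subgroup.normalClosure_eq_self]; exact hne
      rw [Ne, Subgroup.eq_top_iff'] at hN
      push_neg at hN
      obtain ⟨x, hx⟩ := hN
      exact ⟨QuotientGroup.mk' _ x, 1, fun h =>
        hx ((QuotientGroup.eq_one_iff _).mp h)⟩
  · intro htop
    rintro ⟨J, _, τ, hsurj, hicc, hnt⟩
    have key : ∀ o : Ordinal.{u}, FCSeries G o ≤ τ.ker := by
      intro o
      induction o using Ordinal.limitRecOn with
      | zero => rw [FCSeries_zero]; exact bot_le
      | add_one o ih =>
        rw [Ordinal.add_one_eq_succ]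
        rw [← Ordinal.add_one_eq_succ, FCSeries_succ]
        set N := Subgroup.normalClosure ((FCSeries G o : Set G)) with hNdef
        have hN : N ≤ τ.ker := Subgroup.normalClosure_le_normal ih
        let τ' : G ⧸ N →* J := QuotientGroup.lift N τ
          (fun x hx => MonoidHom.mem_ker.mp (hN hx))
        have hτ' : Function.Surjective τ' := by
          intro j
          obtain ⟨g, rfl⟩ := hsurj j
          exact ⟨QuotientGroup.mk g, rfl⟩
        intro g hg
        have hfc : IsFCElement ((QuotientGroup.mk' N) g) := hg
        have hfc2 : IsFCElement (τ' ((QuotientGroup.mk' N) g)) :=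
          isFCElement_map τ' hτ' hfc
        have heq : τ' ((QuotientGroup.mk' N) g) = τ g := rfl
        rw [heq] at hfc2
        rw [MonoidHom.mem_ker]
        by_contra h1
        exact hicc _ h1 hfc2
      | limit o ho ih =>
        rw [FCSeries_limit G o ho]
        exact iSup_le fun a => ih a a.2
    have hker : (⊤ : Subgroup G) ≤ τ.ker := htop ▸ iSup_le key
    obtain ⟨a, b, hab⟩ := hnt
    obtain ⟨x, rfl⟩ := hsurj a
    obtain ⟨y, rfl⟩ := hsurj b
    have hx1 : τ x = 1 := MonoidHom.mem_ker.mp (hker (Subgroup.mem_top x))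
    have hy1 : τ y = 1 := MonoidHom.mem_ker.mp (hker (Subgroup.mem_top y))
    exact hab (hx1.trans hy1.symm)
end

section
/- If G is a finitely generated group whose FC-center equals G (every element has finite conjugacy class), then G is virtually abelian. -/
universe u

theorem aux_orbit_eq {G : Type u} [Group G] (g : G) :
    MulAction.orbit (ConjAct G) g = conjClassSet g := by
  ext h
  constructor
  · rintro ⟨x, rfl⟩
    exact ⟨ConjAct.ofConjAct x, by simp [ConjAct.smul_def]⟩
  · rintro ⟨x, rfl⟩
    exact ⟨ConjAct.toConjAct x, by simp [ConjAct.smul_def]⟩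

theorem aux_centralizer_finiteIndex {G : Type u} [Group G] (g : G)
    (h : (conjClassSet g).Finite) :
    (Subgroup.centralizer (Subgroup.zpowers g : Set G)).FiniteIndex := by
  have h1 : Subgroup.centralizer ({g} : Set G)
      = Subgroup.centralizer (Subgroup.zpowers g : Set G) := by
    apply le_antisymm
    · intro k hk
      rw [Subgroup.mem_centralizer_iff] at hk ⊢
      intro m hm
      obtain ⟨n, rfl⟩ := Subgroup.mem_zpowers_iff.mp hm
      have hc : Commute g k := hk g (Set.mem_singleton g)
      exact (hc.zpow_left n).eq
    · exact Subgroup.centralizer_le (by simp [Subgroup.mem_zpowers g])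
  rw [← h1, Subgroup.centralizer_eq_comap_stabilizer]
  constructor
  refine (Subgroup.index_comap_of_surjective (H := MulAction.stabilizer (ConjAct G) g)
    (f := (ConjAct.toConjAct : G ≃* ConjAct G).toMonoidHom) ConjAct.toConjAct.surjective).trans_ne ?_
  rw [MulAction.index_stabilizer, aux_orbit_eq]
  have hne : (conjClassSet g).Nonempty := ⟨g, 1, by group⟩
  exact ((Set.ncard_pos h).mpr hne).ne' 

/-- A finitely generated FC-group is virtually abelian. -/
theorem fg_fc_group_virtually_abelian (G : Type u) [Group G] (hfg : Group.FG G)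
    (h : ∀ g : G, (conjClassSet g).Finite) :
    ∃ A : Subgroup G, A.FiniteIndex ∧ ∀ a ∈ A, ∀ b ∈ A, a * b = b * a := by
  refine ⟨Subgroup.center G, ?_, fun a ha b hb => (Subgroup.mem_center_iff.mp hb a)⟩
  obtain ⟨S, hS⟩ := Group.fg_def.mp hfg
  rw [Subgroup.center_eq_infi' (s := (S : Set G)) hS]
  have : Finite (S : Set G) := S.finite_toSet
  exact Subgroup.finiteIndex_iInf fun g => by
    haveI := aux_centralizer_finiteIndex (g : G) (h g)
    exact Subgroup.finiteIndex_of_le (H := Subgroup.centralizer (Subgroup.zpowers (g : G) : Set G))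
      (Subgroup.centralizer_le (t := (Subgroup.zpowers (g : G) : Set G)) (s := {(g : G)})
        (by simp [Subgroup.mem_zpowers (g : G)]))
end
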